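/- arXiv:1102.3956 — 3 statements merged into one kernel-verified Lean document; each statement's English description precedes it below -/
import Mathlib

section
/- The series ∑_{k ≥ 0} (1 - exp(-p·(c/(x + k^γ))^α)) converges for every x > 0, and tends to 0 as x → ∞. -/
open Filter Topology Real

/-- For `p, c > 0`, `α ∈ (1,2)`, `γ ∈ (0,1)` with `αγ > 1`, the series
`∑_{k ≥ 0} (1 - exp(-p (c/(x + k^γ))^α))` converges for every `x > 0`, and the sum
tends to `0` as `x → ∞`. -/
theorem series_convergent_and_tendsto_zero
    (p c α γ : ℝ) (hp : 0 < p) (hc : 0 < c) (hα1 : 1 < α) (hα2 : α < 2)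
    (hγ0 : 0 < γ) (hγ1 : γ < 1) (hαγ : 1 < α * γ) :
    (∀ x : ℝ, 0 < x →
        Summable (fun k : ℕ => 1 - Real.exp (-(p * (c / (x + (k : ℝ) ^ γ)) ^ α)))) ∧
      Tendsto (fun x : ℝ => ∑' k : ℕ, (1 - Real.exp (-(p * (c / (x + (k : ℝ) ^ γ)) ^ α))))
        atTop (𝓝 0) := by
  have hα0 : (0:ℝ) < α := by linarith
  have hag : (0:ℝ) < α * γ := by linarith
  set θ : ℝ := (1 + α * γ) / (2 * (α * γ)) with hθdef
  have hθ0 : 0 < θ := by positivity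
  have hθ1 : θ < 1 := by rw [hθdef, div_lt_one (by positivity)]; linarith
  set s : ℝ := α * γ * θ with hsdef
  have hsval : s = (1 + α * γ) / 2 := by
    rw [hsdef, hθdef]; field_simp
  have hs1 : 1 < s := by rw [hsval]; linarith
  set ε : ℝ := α * (1 - θ) with hεdef
  have hε : 0 < ε := by
    have : 0 < 1 - θ := by linarith
    positivity
  have hεα : ε ≤ α := by nlinarith
  have hexp : ∀ t : ℝ, 1 - Real.exp (-t) ≤ t := by
    intro t; have := Real.add_one_le_exp (-t); linarith
  have hnn : ∀ t : ℝ, 0 ≤ t → 0 ≤ 1 - Real.exp (-t) := by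
    intro t ht
    have : Real.exp (-t) ≤ Real.exp 0 := Real.exp_le_exp.mpr (by linarith)
    simp only [Real.exp_zero] at this; linarith
  -- key bound for summability
  have key1 : ∀ x : ℝ, 0 < x → ∀ k : ℕ, 1 ≤ k →
      1 - Real.exp (-(p * (c / (x + (k : ℝ) ^ γ)) ^ α)) ≤ p * c ^ α * (((k : ℝ)) ^ (α * γ))⁻¹ := by
    intro x hx k hk
    have hk0 : (0:ℝ) < (k : ℝ) := by exact_mod_cast hk
    have hkγ : (0:ℝ) < (k : ℝ) ^ γ := Real.rpow_pos_of_pos hk0 γ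
    have hden : 0 < x + (k : ℝ) ^ γ := by linarith
    refine (hexp _).trans ?_
    have h1 : c / (x + (k : ℝ) ^ γ) ≤ c / (k : ℝ) ^ γ := by
      gcongr; linarith
    have h2 : (c / (x + (k : ℝ) ^ γ)) ^ α ≤ (c / (k : ℝ) ^ γ) ^ α :=
      Real.rpow_le_rpow (by positivity) h1 hα0.le
    calc p * (c / (x + (k : ℝ) ^ γ)) ^ α ≤ p * (c / (k : ℝ) ^ γ) ^ α := by
          exact mul_le_mul_of_nonneg_left h2 hp.le
      _ = p * c ^ α * (((k : ℝ)) ^ (α * γ))⁻¹ := by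
          rw [Real.div_rpow hc.le hkγ.le, ← Real.rpow_mul hk0.le, mul_comm γ α,
            div_eq_mul_inv]
          ring
  have hScomp : Summable (fun k : ℕ => p * c ^ α * (((k : ℝ)) ^ (α * γ))⁻¹) :=
    (Real.summable_nat_rpow_inv.mpr hαγ).mul_left _
  have hsum : ∀ x : ℝ, 0 < x →
      Summable (fun k : ℕ => 1 - Real.exp (-(p * (c / (x + (k : ℝ) ^ γ)) ^ α))) := by
    intro x hx
    apply (summable_nat_add_iff 1).mp
    refine Summable.of_nonneg_of_le (fun n => ?_)
      (fun n => key1 x hx (n + 1) (Nat.le_add_left 1 n))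
      ((summable_nat_add_iff (f := fun k : ℕ => p * c ^ α * (((k : ℝ)) ^ (α * γ))⁻¹) 1).mpr hScomp)
    apply hnn
    have : (0:ℝ) < x + ((n + 1 : ℕ) : ℝ) ^ γ := by positivity
    positivity
  refine ⟨hsum, ?_⟩
  -- key bound for the limit
  have key2 : ∀ x : ℝ, 1 ≤ x → ∀ k : ℕ, 1 ≤ k →
      1 - Real.exp (-(p * (c / (x + (k : ℝ) ^ γ)) ^ α)) ≤
        p * c ^ α * x ^ (-ε) * ((k : ℝ)) ^ (-s) := by
    intro x hx k hk
    have hx0 : (0:ℝ) < x := by linarith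
    have hk0 : (0:ℝ) < (k : ℝ) := by exact_mod_cast hk
    have hkγ : (0:ℝ) < (k : ℝ) ^ γ := Real.rpow_pos_of_pos hk0 γ
    have hden : 0 < x + (k : ℝ) ^ γ := by linarith
    refine (hexp _).trans ?_
    have hA : x ^ (1 - θ) * ((k : ℝ) ^ γ) ^ θ ≤ x + (k : ℝ) ^ γ := by
      refine (Real.geom_mean_le_arith_mean2_weighted (by linarith) hθ0.le hx0.le hkγ.le
        (by ring)).trans ?_
      nlinarith
    have hB : x ^ ε * (k : ℝ) ^ s ≤ (x + (k : ℝ) ^ γ) ^ α := by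
      have h := Real.rpow_le_rpow (by positivity) hA hα0.le
      calc x ^ ε * (k : ℝ) ^ s
          = (x ^ (1 - θ) * ((k : ℝ) ^ γ) ^ θ) ^ α := by
            rw [Real.mul_rpow (by positivity) (by positivity),
              ← Real.rpow_mul hx0.le, ← Real.rpow_mul hk0.le, ← Real.rpow_mul hk0.le]
            congr 1
            · rw [hεdef]; congr 1; ring
            · rw [hsdef]; congr 1; ring
        _ ≤ _ := h
    have hpos : (0:ℝ) < x ^ ε * (k : ℝ) ^ s := by positivity
    calc p * (c / (x + (k : ℝ) ^ γ)) ^ α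
        = p * (c ^ α / (x + (k : ℝ) ^ γ) ^ α) := by
          rw [Real.div_rpow hc.le hden.le]
      _ ≤ p * (c ^ α / (x ^ ε * (k : ℝ) ^ s)) := by
          gcongr
      _ = p * c ^ α * x ^ (-ε) * ((k : ℝ)) ^ (-s) := by
          rw [Real.rpow_neg hx0.le, Real.rpow_neg hk0.le]
          field_simp
  -- the tail sum comparison series
  have hT : Summable (fun n : ℕ => (((n + 1 : ℕ) : ℝ)) ^ (-s)) := by
    have : Summable (fun n : ℕ => (((n : ℝ)) ^ s)⁻¹) := Real.summable_nat_rpow_inv.mpr hs1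
    have h2 := (summable_nat_add_iff 1).mpr this
    refine h2.congr fun n => ?_
    rw [Real.rpow_neg (by positivity)]
  set T : ℝ := ∑' n : ℕ, (((n + 1 : ℕ) : ℝ)) ^ (-s) with hTdef
  have hTnn : 0 ≤ T := tsum_nonneg fun n => by positivity
  set C : ℝ := p * c ^ α * (1 + T) with hCdef
  have hlim : Tendsto (fun x : ℝ => C * x ^ (-ε)) atTop (𝓝 0) := by
    have := (tendsto_rpow_neg_atTop hε).const_mul C
    simpa using this
  apply squeeze_zero' ?_ ?_ hlim
  · filter_upwards [eventually_ge_atTop (1:ℝ)] with x hx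
    have hx0 : (0:ℝ) < x := by linarith
    refine tsum_nonneg fun k => ?_
    apply hnn
    have : (0:ℝ) < x + (k : ℝ) ^ γ := by
      have : (0:ℝ) ≤ (k : ℝ) ^ γ := Real.rpow_nonneg (Nat.cast_nonneg k) γ
      linarith
    positivity
  · filter_upwards [eventually_ge_atTop (1:ℝ)] with x hx
    have hx0 : (0:ℝ) < x := by linarith
    have hSf := hsum x hx0
    rw [Summable.tsum_eq_zero_add hSf]
    have hzero : ((0 : ℕ) : ℝ) ^ γ = 0 := by
      rw [Nat.cast_zero, Real.zero_rpow hγ0.ne']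
    have hterm0 : 1 - Real.exp (-(p * (c / (x + ((0:ℕ) : ℝ) ^ γ)) ^ α)) ≤ p * c ^ α * x ^ (-ε) := by
      rw [hzero, add_zero]
      refine (hexp _).trans ?_
      rw [Real.div_rpow hc.le hx0.le]
      have h1 : x ^ (-α) ≤ x ^ (-ε) := Real.rpow_le_rpow_of_exponent_le hx (by linarith)
      calc p * (c ^ α / x ^ α) = p * c ^ α * x ^ (-α) := by
            rw [Real.rpow_neg hx0.le]; ring
        _ ≤ p * c ^ α * x ^ (-ε) := by
            have : (0:ℝ) ≤ p * c ^ α := by positivity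
            exact mul_le_mul_of_nonneg_left h1 this
    have htail : (∑' n : ℕ, (1 - Real.exp (-(p * (c / (x + ((n + 1 : ℕ) : ℝ) ^ γ)) ^ α)))) ≤
        p * c ^ α * x ^ (-ε) * T := by
      have hsum' : Summable (fun n : ℕ =>
          1 - Real.exp (-(p * (c / (x + ((n + 1 : ℕ) : ℝ) ^ γ)) ^ α))) :=
        (summable_nat_add_iff
          (f := fun k : ℕ => 1 - Real.exp (-(p * (c / (x + (k : ℝ) ^ γ)) ^ α))) 1).mpr hSf
      have hg : Summable (fun n : ℕ => p * c ^ α * x ^ (-ε) * (((n + 1 : ℕ) : ℝ)) ^ (-s)) :=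
        hT.mul_left _
      calc (∑' n : ℕ, (1 - Real.exp (-(p * (c / (x + ((n + 1 : ℕ) : ℝ) ^ γ)) ^ α))))
          ≤ ∑' n : ℕ, p * c ^ α * x ^ (-ε) * (((n + 1 : ℕ) : ℝ)) ^ (-s) := by
            refine Summable.tsum_le_tsum (fun n => ?_) hsum' hg
            exact key2 x hx (n + 1) (Nat.le_add_left 1 n)
        _ = p * c ^ α * x ^ (-ε) * T := by
            rw [hTdef, tsum_mul_left]
    calc (1 - Real.exp (-(p * (c / (x + ((0:ℕ) : ℝ) ^ γ)) ^ α))) +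
          ∑' n : ℕ, (1 - Real.exp (-(p * (c / (x + ((n + 1 : ℕ) : ℝ) ^ γ)) ^ α)))
        ≤ p * c ^ α * x ^ (-ε) + p * c ^ α * x ^ (-ε) * T := add_le_add hterm0 htail
      _ = C * x ^ (-ε) := by rw [hCdef]; ring
end

section
/- If N_+ = ∑_i δ_{(t_i, x_i)} is a Poisson point process on [0,∞) × (0,∞) with intensity measure λ ⊗ ν_+, where λ is Lebesgue measure and ν_+ has density p·α·x^{-α-1} on (0,∞), and the random variables M_k = sup{c·x_i - k^γ : t_i ∈ [k, k+1)} satisfy P(M_k > x) = 1 - exp(-p·((x + k^γ)/c)^{-α}), then if αγ > 1 the random variable sup_{i ≥ 1} (c·x_i - t_i^γ) is almost surely finite. -/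
open MeasureTheory Filter Topology Set

/-- Let `N_+ = ∑_i δ_{(t_i,x_i)}` be a Poisson point process whose
per-strip suprema `M_k = sup{c x_i - k^γ : t_i ∈ [k,k+1)}` have tail
`P(M_k > x) = 1 - exp(-p ((x+k^γ)/c)^{-α})`.  If `αγ > 1` then
`sup_{i ≥ 1} (c x_i - t_i^γ)` is almost surely finite. -/
theorem sup_points_minus_drift_as_finite
    (p c α γ : ℝ) (hp : 0 < p) (hc : 0 < c) (hα1 : 1 < α) (hα2 : α < 2)
    (hγ0 : 0 < γ) (hγ1 : γ < 1) (hαγ : 1 < α * γ)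
    {Ω : Type*} [MeasurableSpace Ω] (P : Measure Ω) [IsProbabilityMeasure P]
    (t x : ℕ → Ω → ℝ)
    (ht : ∀ i ω, 0 ≤ t i ω) (hx : ∀ i ω, 0 < x i ω)
    (hTail : ∀ (k : ℕ) (y : ℝ), 0 < y →
      P {ω | ∃ i, t i ω ∈ Set.Ico (k : ℝ) (k + 1) ∧ y < c * x i ω - (k : ℝ) ^ γ}
        = 1 - ENNReal.ofReal (Real.exp (-(p * (c / (y + (k : ℝ) ^ γ)) ^ α)))) :
    ∀ᵐ ω ∂P, BddAbove (Set.range fun i : ℕ => c * x i ω - (t i ω) ^ γ) := by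
  have hα0 : (0:ℝ) < α := lt_trans one_pos hα1
  -- the per-strip event with threshold 1
  set Q : ℕ → Ω → Prop := fun k ω =>
    ∃ i, t i ω ∈ Set.Ico (k : ℝ) (k + 1) ∧ 1 < c * x i ω - (k : ℝ) ^ γ with hQ
  -- nonnegativity of the exponents
  have hu_nonneg : ∀ (y : ℝ) (k : ℕ), 0 ≤ y → 0 ≤ p * (c / (y + (k : ℝ) ^ γ)) ^ α := by
    intro y k hy
    have : 0 ≤ c / (y + (k : ℝ) ^ γ) :=
      div_nonneg hc.le (by positivity)
    positivity
  -- generic bound : 1 - ofReal (exp (-u)) ≤ ofReal u for u ≥ 0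
  have hbound : ∀ u : ℝ, 0 ≤ u →
      (1 : ENNReal) - ENNReal.ofReal (Real.exp (-u)) ≤ ENNReal.ofReal u := by
    intro u hu
    rw [tsub_le_iff_right, ← ENNReal.ofReal_add hu (Real.exp_nonneg _), ← ENNReal.ofReal_one]
    apply ENNReal.ofReal_le_ofReal
    have := Real.add_one_le_exp (-u)
    linarith
  -- Part 1 : Borel–Cantelli for the events Q k
  have hsummable : Summable (fun k : ℕ => p * (c / (1 + (k : ℝ) ^ γ)) ^ α) := by
    rw [← summable_nat_add_iff 1]
    have hS : Summable (fun k : ℕ => p * c ^ α * (1 / ((k : ℝ) + 1) ^ (γ * α))) := by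
      apply Summable.mul_left
      have := (Real.summable_one_div_nat_rpow (p := γ * α)).mpr (by linarith [mul_comm α γ])
      have := (summable_nat_add_iff 1).mpr this
      convert this using 2 with k
      · rfl
      push_cast
      ring_nf
    apply Summable.of_nonneg_of_le _ _ hS
    · intro k
      exact hu_nonneg 1 (k + 1) one_pos.le
    · intro k
      have hk1 : (0:ℝ) < ((k:ℝ) + 1) := by positivity
      have hkγ : (0:ℝ) < ((k:ℝ) + 1) ^ γ := Real.rpow_pos_of_pos hk1 γ
      have h1 : c / (1 + ((k+1 : ℕ) : ℝ) ^ γ) ≤ c / (((k:ℝ) + 1) ^ γ) := by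
        push_cast
        apply div_le_div_of_nonneg_left hc.le hkγ
        linarith
      have h2 : (c / (1 + ((k+1 : ℕ) : ℝ) ^ γ)) ^ α ≤ (c / (((k:ℝ) + 1) ^ γ)) ^ α := by
        apply Real.rpow_le_rpow _ h1 hα0.le
        apply div_nonneg hc.le (by positivity)
      have h3 : (c / (((k:ℝ) + 1) ^ γ)) ^ α = c ^ α * (1 / ((k : ℝ) + 1) ^ (γ * α)) := by
        rw [Real.div_rpow hc.le hkγ.le, ← Real.rpow_mul hk1.le, div_eq_mul_one_div]
      calc p * (c / (1 + ((k+1 : ℕ) : ℝ) ^ γ)) ^ α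
          ≤ p * (c / (((k:ℝ) + 1) ^ γ)) ^ α := by nlinarith [hp.le]
        _ = p * c ^ α * (1 / ((k : ℝ) + 1) ^ (γ * α)) := by rw [h3]; ring
  have hfreq : ∀ᵐ ω ∂P, ∀ᶠ k in atTop, ¬ Q k ω := by
    have hzero : P {ω | ∃ᶠ k in atTop, Q k ω} = 0 := by
      apply measure_setOf_frequently_eq_zero
      have hle : ∀ k : ℕ, P {ω | Q k ω} ≤
          ENNReal.ofReal (p * (c / (1 + (k : ℝ) ^ γ)) ^ α) := by
        intro k
        rw [hQ]
        rw [hTail k 1 one_pos]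
        exact hbound _ (hu_nonneg 1 k one_pos.le)
      have hcalc : ∑' k : ℕ, P {ω | Q k ω}
          ≤ ENNReal.ofReal (∑' k : ℕ, p * (c / (1 + (k : ℝ) ^ γ)) ^ α) := by
        calc ∑' k : ℕ, P {ω | Q k ω}
            ≤ ∑' k : ℕ, ENNReal.ofReal (p * (c / (1 + (k : ℝ) ^ γ)) ^ α) :=
              ENNReal.tsum_le_tsum hle
          _ = ENNReal.ofReal (∑' k : ℕ, p * (c / (1 + (k : ℝ) ^ γ)) ^ α) :=
              (ENNReal.ofReal_tsum_of_nonneg (fun k => hu_nonneg 1 k one_pos.le) hsummable).symm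
      exact ne_top_of_le_ne_top ENNReal.ofReal_ne_top hcalc
    rw [ae_iff]
    simp only [not_eventually, not_not]
    exact hzero
  -- Part 2 : for each strip, the supremum is a.s. finite
  have hstrip : ∀ k : ℕ, ∀ᵐ ω ∂P, ∃ n : ℕ,
      ∀ i, t i ω ∈ Set.Ico (k : ℝ) (k + 1) → c * x i ω - (k : ℝ) ^ γ ≤ n := by
    intro k
    rw [ae_iff]
    have hsubset : ∀ n : ℕ, {ω | ¬ ∃ n : ℕ,
        ∀ i, t i ω ∈ Set.Ico (k : ℝ) (k + 1) → c * x i ω - (k : ℝ) ^ γ ≤ n} ⊆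
        {ω | ∃ i, t i ω ∈ Set.Ico (k : ℝ) (k + 1) ∧
          ((n:ℝ) + 1) < c * x i ω - (k : ℝ) ^ γ} := by
      intro n ω hω
      push_neg at hω
      obtain ⟨i, hi, hlt⟩ := hω (n + 1)
      exact ⟨i, hi, by push_cast at hlt; linarith⟩
    have hle : ∀ n : ℕ, P {ω | ¬ ∃ n : ℕ,
        ∀ i, t i ω ∈ Set.Ico (k : ℝ) (k + 1) → c * x i ω - (k : ℝ) ^ γ ≤ n} ≤
        1 - ENNReal.ofReal (Real.exp (-(p * (c / (((n:ℝ)+1) + (k : ℝ) ^ γ)) ^ α))) := by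
      intro n
      rw [← hTail k ((n:ℝ) + 1) (by positivity)]
      exact measure_mono (hsubset n)
    -- the tail probabilities tend to 0
    have h1 : Tendsto (fun n : ℕ => ((n:ℝ) + 1) + (k : ℝ) ^ γ) atTop atTop := by
      apply tendsto_atTop_add_const_right
      exact tendsto_atTop_add_const_right _ _ tendsto_natCast_atTop_atTop
    have h2 : Tendsto (fun n : ℕ => p * (c / (((n:ℝ)+1) + (k : ℝ) ^ γ)) ^ α) atTop (𝓝 0) := by
      have h3 : Tendsto (fun n : ℕ => (((n:ℝ)+1) + (k : ℝ) ^ γ) ^ (-α)) atTop (𝓝 0) :=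
        (tendsto_rpow_neg_atTop hα0).comp h1
      have h4 : ∀ᶠ n : ℕ in atTop, p * (c / (((n:ℝ)+1) + (k : ℝ) ^ γ)) ^ α =
          p * c ^ α * ((((n:ℝ)+1) + (k : ℝ) ^ γ) ^ (-α)) := by
        filter_upwards [eventually_ge_atTop 0] with n _
        have hd : (0:ℝ) < ((n:ℝ)+1) + (k : ℝ) ^ γ := by positivity
        rw [Real.div_rpow hc.le hd.le, Real.rpow_neg hd.le, div_eq_mul_inv]
        ring
      rw [tendsto_congr' h4]
      have := h3.const_mul (p * c ^ α)
      simpa using this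
    have h5 : Tendsto (fun n : ℕ =>
        Real.exp (-(p * (c / (((n:ℝ)+1) + (k : ℝ) ^ γ)) ^ α))) atTop (𝓝 1) := by
      have h2n : Tendsto (fun n : ℕ => -(p * (c / (((n:ℝ)+1) + (k : ℝ) ^ γ)) ^ α)) atTop (𝓝 0) := by
        simpa using h2.neg
      have := (Real.continuous_exp.tendsto 0).comp h2n
      simpa [Function.comp_def] using this
    have h6 : Tendsto (fun n : ℕ =>
        ENNReal.ofReal (Real.exp (-(p * (c / (((n:ℝ)+1) + (k : ℝ) ^ γ)) ^ α)))) atTop (𝓝 1) := by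
      have := (ENNReal.continuous_ofReal.tendsto 1).comp h5
      simpa [Function.comp_def] using this
    have h7 := ENNReal.Tendsto.sub (tendsto_const_nhds (x := (1:ENNReal)) (f := (atTop : Filter ℕ))) h6
      (Or.inl ENNReal.one_ne_top)
    rw [tsub_self] at h7
    exact le_antisymm (ge_of_tendsto' h7 hle) zero_le
  -- combine
  filter_upwards [hfreq, ae_all_iff.mpr hstrip] with ω h1 h2
  obtain ⟨K, hK⟩ := eventually_atTop.mp h1
  choose n hn using h2
  set N : ℕ := (Finset.range K).sup n with hN
  refine ⟨max 1 (N : ℝ), ?_⟩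
  rintro _ ⟨i, rfl⟩
  set k : ℕ := ⌊t i ω⌋₊ with hk
  have hk1 : (k : ℝ) ≤ t i ω := Nat.floor_le (ht i ω)
  have hmem : t i ω ∈ Set.Ico (k : ℝ) ((k : ℝ) + 1) := ⟨hk1, Nat.lt_floor_add_one _⟩
  have hmono : (k : ℝ) ^ γ ≤ (t i ω) ^ γ :=
    Real.rpow_le_rpow (Nat.cast_nonneg k) hk1 hγ0.le
  by_cases hkK : K ≤ k
  · have := hK k hkK
    simp only [hQ] at this
    push_neg at this
    have := this i hmem
    calc c * x i ω - (t i ω) ^ γ ≤ c * x i ω - (k : ℝ) ^ γ := by linarith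
      _ ≤ 1 := this
      _ ≤ max 1 (N : ℝ) := le_max_left _ _
  · push_neg at hkK
    have hnk := hn k i hmem
    have hNk : (n k : ℝ) ≤ (N : ℝ) := by
      exact_mod_cast Finset.le_sup (Finset.mem_range.mpr hkK)
    calc c * x i ω - (t i ω) ^ γ ≤ c * x i ω - (k : ℝ) ^ γ := by linarith
      _ ≤ (n k : ℝ) := hnk
      _ ≤ max 1 (N : ℝ) := le_trans hNk (le_max_right _ _)
end

section
/- With c_{n,i} = g_{[0,i)}·∫_{F^←(1/n)}^{F^←(1−1/n)} x dF(x), if the truncated mean is O(F_*^←(1−1/n)/n) and g_{[0,i)} is regularly varying of index γ < 1, then for any M > 0, max_{1 ≤ i ≤ Mn} c_{n,i}/F_*^←(1−1/n) → 0 as n → ∞. -/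
open Filter Topology Asymptotics

/-- Regular variation for sequences. -/
def RegVarSeq (a : ℕ → ℝ) (ρ : ℝ) : Prop :=
  ∀ l : ℝ, 0 < l →
    Tendsto (fun n : ℕ => a ⌊l * (n : ℝ)⌋₊ / a n) atTop (𝓝 (l ^ ρ))

open MeasureTheory
open scoped ENNReal NNReal

lemma win_mem_iff {a b : ℕ} (ha : 0 < a) (hb : 0 < b) (u : ℝ) :
    u ∈ Set.Ico (Real.log ((b : ℝ) / a)) (Real.log (((b : ℝ) + 1) / a)) ↔
      ⌊Real.exp u * (a : ℝ)⌋₊ = b := by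
  have ha' : (0:ℝ) < a := by exact_mod_cast ha
  have hb' : (0:ℝ) < b := by exact_mod_cast hb
  rw [Set.mem_Ico, Nat.floor_eq_iff (by positivity)]
  rw [Real.log_le_iff_le_exp (by positivity), Real.lt_log_iff_exp_lt (by positivity)]
  rw [div_le_iff₀ ha', lt_div_iff₀ ha']

lemma win_len {a b : ℕ} (ha : 0 < a) (hb : 0 < b) :
    Real.log ((b : ℝ) / a) + 1/((b:ℝ)+1) ≤ Real.log (((b : ℝ) + 1) / a) := by
  have ha' : (0:ℝ) < a := by exact_mod_cast ha
  have hb' : (0:ℝ) < b := by exact_mod_cast hb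
  have h1 : Real.log ((b:ℝ)/((b:ℝ)+1)) ≤ (b:ℝ)/((b:ℝ)+1) - 1 :=
    Real.log_le_sub_one_of_pos (by positivity)
  have e1 : Real.log ((b:ℝ)/a) = Real.log b - Real.log a :=
    Real.log_div (ne_of_gt hb') (ne_of_gt ha')
  have e2 : Real.log (((b:ℝ)+1)/a) = Real.log ((b:ℝ)+1) - Real.log a :=
    Real.log_div (by positivity) (ne_of_gt ha')
  have e3 : Real.log ((b:ℝ)/((b:ℝ)+1)) = Real.log b - Real.log ((b:ℝ)+1) :=
    Real.log_div (ne_of_gt hb') (by positivity)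
  have e4 : (b:ℝ)/((b:ℝ)+1) - 1 = -(1/((b:ℝ)+1)) := by field_simp; ring
  linarith

lemma card_le_of_disjoint_windows (F : Finset ℕ) (W : ℕ → Set ℝ) (Bset : Set ℝ) (l : ℝ)
    (hsub : ∀ m ∈ F, W m ⊆ Bset) (hmeas : ∀ m ∈ F, MeasurableSet (W m))
    (hdisj : (F : Set ℕ).PairwiseDisjoint W)
    (hlen : ∀ m ∈ F, ENNReal.ofReal l ≤ volume (W m)) :
    (F.card : ℝ≥0∞) * ENNReal.ofReal l ≤ volume Bset := by
  calc (F.card : ℝ≥0∞) * ENNReal.ofReal l = ∑ _m ∈ F, ENNReal.ofReal l := by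
        rw [Finset.sum_const, nsmul_eq_mul]
    _ ≤ ∑ m ∈ F, volume (W m) := Finset.sum_le_sum hlen
    _ = volume (⋃ m ∈ F, W m) := (measure_biUnion_finset hdisj hmeas).symm
    _ ≤ volume Bset := measure_mono (Set.iUnion₂_subset hsub)

lemma card_real_bound {F : Finset ℕ} {l d : ℝ} (hd : 0 ≤ d)
    (h : (F.card : ℝ≥0∞) * ENNReal.ofReal l ≤ ENNReal.ofReal d) : (F.card : ℝ) * l ≤ d := by
  rcases le_or_gt l 0 with hl | hl
  · have : (F.card : ℝ) * l ≤ 0 := mul_nonpos_of_nonneg_of_nonpos (Nat.cast_nonneg _) hl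
    linarith
  · have h2 : ENNReal.ofReal ((F.card : ℝ) * l) ≤ ENNReal.ofReal d := by
      rw [ENNReal.ofReal_mul (by positivity), ENNReal.ofReal_natCast]
      exact h
    exact (ENNReal.ofReal_le_ofReal_iff hd).1 h2

lemma W2_disj_aux {n T m m' : ℕ} (hn : 0 < n) (hTn : n ≤ T) (hm' : m' ≤ 2*n-1)
    (hn2 : 2 ≤ n) (hmm : m + 2 ≤ m') {u : ℝ}
    (h1 : ⌊Real.exp u * (m:ℝ)⌋₊ = T) (h2 : ⌊Real.exp u * (m':ℝ)⌋₊ = T) : False := by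
  have hm'0 : (0:ℝ) < m' := by exact_mod_cast (by omega : 0 < m')
  have hepos := Real.exp_pos u
  have f1 := (Nat.floor_eq_iff (by positivity)).1 h1
  have f2 := (Nat.floor_eq_iff (by positivity)).1 h2
  have hTm' : (m' : ℝ) < 2 * T := by exact_mod_cast (by omega : m' < 2 * T)
  have he : (1:ℝ)/2 < Real.exp u := by nlinarith [f2.1]
  have hmm' : (m:ℝ) + 2 ≤ (m':ℝ) := by exact_mod_cast hmm
  nlinarith [f1.1, f2.2, mul_le_mul_of_nonneg_left hmm' hepos.le]

lemma doubling_bound (G : ℕ → ℝ) (γ : ℝ) (hγ0 : 0 < γ) (hγ1 : γ < 1)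
    (hG : RegVarSeq G γ) (N0 : ℕ) (hN0 : ∀ n ≥ N0, 0 < G n) :
    ∃ N : ℕ, ∀ n ≥ N, ∀ j, n ≤ j → j ≤ 2 * n → G j ≤ 64 * G n := by
  classical
  set J : Set ℝ := Set.Icc (-(Real.log 2)) (Real.log 2) with hJdef
  set S : ℕ → Set ℝ := fun n => {u : ℝ |
      G ⌊Real.exp u * (n:ℝ)⌋₊ ≤ 8 * G n ∧ G n ≤ 8 * G ⌊Real.exp u * (n:ℝ)⌋₊} with hSdef
  set A : ℕ → Set ℝ := fun k => J ∩ ⋂ n ∈ Set.Ici k, S n with hAdef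
  have measJ : MeasurableSet J := by rw [hJdef]; exact measurableSet_Icc
  have measS : ∀ n : ℕ, MeasurableSet (S n) := by
    intro n
    have hf : Measurable fun u : ℝ => G ⌊Real.exp u * (n:ℝ)⌋₊ := by
      have h1 : Measurable fun u : ℝ => Real.exp u * (n:ℝ) := by measurability
      exact (measurable_from_top (f := G)).comp (Nat.measurable_floor.comp h1)
    rw [hSdef]
    exact (measurableSet_le hf measurable_const).inter
      (measurableSet_le measurable_const (hf.const_mul 8))
  have measA : ∀ k, MeasurableSet (A k) := by
    intro k
    rw [hAdef]
    exact measJ.inter (MeasurableSet.biInter (Set.to_countable _) fun n _ => measS n)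
  have hmono : Monotone A := by
    intro k k' hkk' u hu
    rw [hAdef] at hu ⊢
    refine ⟨hu.1, ?_⟩
    have h2 := hu.2
    rw [Set.mem_iInter₂] at h2 ⊢
    exact fun n hn => h2 n (le_trans hkk' hn)
  have cover : ∀ u ∈ J, ∃ k : ℕ, u ∈ A k := by
    intro u hu
    rw [hJdef] at hu
    have hexp : (0:ℝ) < Real.exp u := Real.exp_pos u
    have hub : Real.exp u ≤ 2 := by
      calc Real.exp u ≤ Real.exp (Real.log 2) := Real.exp_le_exp.2 hu.2
        _ = 2 := Real.exp_log (by norm_num)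
    have hlb : (1:ℝ)/2 ≤ Real.exp u := by
      have h := Real.exp_le_exp.2 hu.1
      rwa [Real.exp_neg, Real.exp_log (by norm_num : (0:ℝ) < 2), ← one_div] at h
    have hL1 : (Real.exp u) ^ γ < 8 := by
      have h1 : (Real.exp u) ^ γ ≤ (2:ℝ) ^ γ := Real.rpow_le_rpow hexp.le hub hγ0.le
      have h2 : (2:ℝ) ^ γ ≤ (2:ℝ) ^ (1:ℝ) :=
        Real.rpow_le_rpow_of_exponent_le (by norm_num) hγ1.le
      rw [Real.rpow_one] at h2; linarith
    have hL2 : (1:ℝ)/8 < (Real.exp u) ^ γ := by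
      have h1 : ((1:ℝ)/2) ^ γ ≤ (Real.exp u) ^ γ := Real.rpow_le_rpow (by norm_num) hlb hγ0.le
      have h2 : ((1:ℝ)/2) ^ (1:ℝ) ≤ ((1:ℝ)/2) ^ γ :=
        Real.rpow_le_rpow_of_exponent_ge (by norm_num) (by norm_num) hγ1.le
      rw [Real.rpow_one] at h2; linarith
    have hlim := hG (Real.exp u) hexp
    have h1 := hlim.eventually_lt_const hL1
    have h2 := hlim.eventually_const_lt hL2
    obtain ⟨k, hk⟩ := Filter.eventually_atTop.1 ((h1.and h2).and (eventually_ge_atTop N0))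
    refine ⟨k, ?_⟩
    rw [hAdef]
    refine ⟨by rw [hJdef]; exact hu, ?_⟩
    rw [Set.mem_iInter₂]
    intro n hn
    obtain ⟨⟨hr1, hr2⟩, hnN0⟩ := hk n hn
    have hGn : 0 < G n := hN0 n hnN0
    rw [hSdef]
    constructor
    · have := (div_lt_iff₀ hGn).1 hr1
      linarith
    · have := (lt_div_iff₀ hGn).1 hr2
      linarith
  set B : ℕ → Set ℝ := fun k => J \ A k with hBdef
  have hBanti : Antitone B := fun k k' hkk' => Set.diff_subset_diff_right (hmono hkk')
  have hBempty : ⋂ k, B k = ∅ := by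
    ext u
    simp only [Set.mem_iInter, Set.mem_empty_iff_false, iff_false, not_forall]
    by_cases hu : u ∈ J
    · obtain ⟨k, hk⟩ := cover u hu
      exact ⟨k, fun h => h.2 hk⟩
    · exact ⟨0, fun h => hu h.1⟩
  have hfin : volume (B 0) ≠ ⊤ := by
    have h1 : volume (B 0) ≤ volume J := measure_mono Set.diff_subset
    refine ne_of_lt (lt_of_le_of_lt h1 ?_)
    rw [hJdef, Real.volume_Icc]
    exact ENNReal.ofReal_lt_top
  have htend : Tendsto (fun k => volume (B k)) atTop (𝓝 0) := by
    have h := tendsto_measure_iInter_atTop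
      (fun k => ((measJ.diff (measA k)).nullMeasurableSet)) hBanti ⟨0, hfin⟩
    rw [hBempty, measure_empty] at h
    exact h
  obtain ⟨k0, hk0⟩ := (htend.eventually_lt_const
    (show (0:ℝ≥0∞) < ENNReal.ofReal (1/100) from ENNReal.ofReal_pos.2 (by norm_num))).exists
  refine ⟨max (max k0 N0) 2, ?_⟩
  intro n hn T hT1 hT2
  have hnk0 : k0 ≤ n := le_trans (le_trans (le_max_left _ _) (le_max_left _ _)) hn
  have hn2 : 2 ≤ n := le_trans (le_max_right _ _) hn
  have hn0 : 0 < n := by omega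
  have hn' : (0:ℝ) < n := by exact_mod_cast hn0
  have hT0 : 0 < T := by omega
  set Mset := Finset.Icc (n+1) (2*n-1) with hMsetdef
  have key : ∃ m ∈ Mset,
      (∃ u ∈ A k0, ⌊Real.exp u * (n:ℝ)⌋₊ = m) ∧ (∃ u ∈ A k0, ⌊Real.exp u * (m:ℝ)⌋₊ = T) := by
    by_contra hbad
    push_neg at hbad
    set W1 : ℕ → Set ℝ := fun m =>
      Set.Ico (Real.log ((m:ℝ)/n)) (Real.log (((m:ℝ)+1)/n)) with hW1def
    set W2 : ℕ → Set ℝ := fun m =>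
      Set.Ico (Real.log ((T:ℝ)/m)) (Real.log (((T:ℝ)+1)/m)) with hW2def
    have hmpos : ∀ m ∈ Mset, 0 < m := by
      intro m hm; rw [hMsetdef, Finset.mem_Icc] at hm; omega
    have hmem1 : ∀ m ∈ Mset, ∀ u : ℝ, u ∈ W1 m ↔ ⌊Real.exp u * (n:ℝ)⌋₊ = m := by
      intro m hm u; rw [hW1def]; exact win_mem_iff hn0 (hmpos m hm) u
    have hmem2 : ∀ m ∈ Mset, ∀ u : ℝ, u ∈ W2 m ↔ ⌊Real.exp u * (m:ℝ)⌋₊ = T := by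
      intro m hm u; rw [hW2def]; exact win_mem_iff (hmpos m hm) hT0 u
    -- windows sit inside J
    have hW1J : ∀ m ∈ Mset, W1 m ⊆ J := by
      intro m hm u hu
      rw [hMsetdef, Finset.mem_Icc] at hm
      rw [hW1def] at hu
      have hm1 : (1:ℝ) ≤ (m:ℝ)/n := by
        rw [le_div_iff₀ hn']
        have : n ≤ m := by omega
        simpa using (by exact_mod_cast this : (n:ℝ) ≤ (m:ℝ))
      have hm2 : ((m:ℝ)+1)/n ≤ 2 := by
        rw [div_le_iff₀ hn']
        have : m + 1 ≤ 2*n := by omega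
        calc (m:ℝ) + 1 = ((m+1 : ℕ) : ℝ) := by push_cast; ring
          _ ≤ ((2*n : ℕ) : ℝ) := by exact_mod_cast this
          _ = 2 * n := by push_cast; ring
      rw [hJdef]
      constructor
      · have h1 : (0:ℝ) ≤ Real.log ((m:ℝ)/n) := Real.log_nonneg hm1
        have h2 : (0:ℝ) ≤ Real.log 2 := Real.log_nonneg (by norm_num)
        linarith [hu.1]
      · have h1 : Real.log (((m:ℝ)+1)/n) ≤ Real.log 2 :=
          Real.log_le_log (by positivity) hm2
        exact le_of_lt (lt_of_lt_of_le hu.2 h1)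
    have hW2J : ∀ m ∈ Mset, W2 m ⊆ J := by
      intro m hm u hu
      rw [hMsetdef, Finset.mem_Icc] at hm
      rw [hW2def] at hu
      have hmpos' : (0:ℝ) < m := by exact_mod_cast (by omega : 0 < m)
      have hlow : (2:ℝ)⁻¹ ≤ (T:ℝ)/m := by
        rw [le_div_iff₀ hmpos']
        have : m ≤ 2*T := by omega
        have h2 : (m:ℝ) ≤ 2*T := by exact_mod_cast this
        linarith
      have hup : ((T:ℝ)+1)/m ≤ 2 := by
        rw [div_le_iff₀ hmpos']
        have : T + 1 ≤ 2*m := by omega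
        calc (T:ℝ) + 1 = ((T+1:ℕ):ℝ) := by push_cast; ring
          _ ≤ ((2*m:ℕ):ℝ) := by exact_mod_cast this
          _ = 2 * m := by push_cast; ring
      rw [hJdef]
      constructor
      · have h1 : Real.log (2:ℝ)⁻¹ ≤ Real.log ((T:ℝ)/m) :=
          Real.log_le_log (by norm_num) hlow
        rw [Real.log_inv] at h1
        linarith [hu.1]
      · have h1 : Real.log (((T:ℝ)+1)/m) ≤ Real.log 2 :=
          Real.log_le_log (by positivity) hup
        exact le_of_lt (lt_of_lt_of_le hu.2 h1)
    -- measure lower bounds for windows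
    have hlen1 : ∀ m ∈ Mset, ENNReal.ofReal (1/(2*(n:ℝ))) ≤ volume (W1 m) := by
      intro m hm
      have hm' := Finset.mem_Icc.1 (by rwa [hMsetdef] at hm)
      rw [hW1def, Real.volume_Ico]
      apply ENNReal.ofReal_le_ofReal
      have h1 := win_len hn0 (hmpos m hm)
      have h2 : 1/(2*(n:ℝ)) ≤ 1/((m:ℝ)+1) := by
        apply one_div_le_one_div_of_le (by positivity)
        have : m + 1 ≤ 2*n := by omega
        calc (m:ℝ) + 1 = ((m+1:ℕ):ℝ) := by push_cast; ring
          _ ≤ ((2*n:ℕ):ℝ) := by exact_mod_cast this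
          _ = 2 * n := by push_cast; ring
      linarith
    have hlen2 : ∀ m ∈ Mset, ENNReal.ofReal (1/(3*(n:ℝ))) ≤ volume (W2 m) := by
      intro m hm
      rw [hW2def, Real.volume_Ico]
      apply ENNReal.ofReal_le_ofReal
      have h1 := win_len (hmpos m hm) hT0
      have h2 : 1/(3*(n:ℝ)) ≤ 1/((T:ℝ)+1) := by
        apply one_div_le_one_div_of_le (by positivity)
        have : T + 1 ≤ 3*n := by omega
        calc (T:ℝ) + 1 = ((T+1:ℕ):ℝ) := by push_cast; ring
          _ ≤ ((3*n:ℕ):ℝ) := by exact_mod_cast this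
          _ = 3 * n := by push_cast; ring
      linarith
    -- split into bad sets
    set Bad1 := Mset.filter (fun m => ¬(W1 m ∩ A k0).Nonempty) with hBad1def
    set Bad2 := Mset.filter (fun m => (W1 m ∩ A k0).Nonempty) with hBad2def
    have hsplit : Bad2.card + Bad1.card = Mset.card := by
      rw [hBad1def, hBad2def]
      exact Finset.card_filter_add_card_filter_not _
    have hBad2empty : ∀ m ∈ Bad2, ¬(W2 m ∩ A k0).Nonempty := by
      intro m hm
      rw [hBad2def, Finset.mem_filter] at hm
      rintro ⟨u, hu1, hu2⟩
      obtain ⟨v, hv1, hv2⟩ := hm.2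
      exact hbad m hm.1 ⟨v, hv2, (hmem1 m hm.1 v).1 hv1⟩ u hu2 ((hmem2 m hm.1 u).1 hu1)
    set Bad2e := Bad2.filter (fun m => Even m) with hBad2edef
    set Bad2o := Bad2.filter (fun m => ¬ Even m) with hBad2odef
    have hsplit2 : Bad2e.card + Bad2o.card = Bad2.card := by
      rw [hBad2edef, hBad2odef]
      exact Finset.card_filter_add_card_filter_not _
    -- counting bounds
    have hmeasW1 : ∀ m ∈ Bad1, MeasurableSet (W1 m) := by
      intro m _; rw [hW1def]; exact measurableSet_Ico
    have hc1 : (Bad1.card : ℝ) * (1/(2*(n:ℝ))) ≤ 1/100 := by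
      apply card_real_bound (by norm_num)
      refine le_of_lt (lt_of_le_of_lt ?_ hk0)
      apply card_le_of_disjoint_windows Bad1 W1 (B k0) (1/(2*(n:ℝ))) ?_ hmeasW1 ?_ ?_
      · intro m hm u hu
        have hmM : m ∈ Mset := Finset.mem_of_mem_filter m (by rwa [hBad1def] at hm)
        rw [hBad1def, Finset.mem_filter] at hm
        rw [hBdef]
        exact ⟨hW1J m hmM hu, fun hA => hm.2 ⟨u, hu, hA⟩⟩
      · intro m hm m' hm' hne
        have hmM : m ∈ Mset := Finset.mem_of_mem_filter m (by
          rw [hBad1def] at hm; exact_mod_cast hm)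
        have hmM' : m' ∈ Mset := Finset.mem_of_mem_filter m' (by
          rw [hBad1def] at hm'; exact_mod_cast hm')
        refine Set.disjoint_left.2 fun u hu hu' => hne ?_
        exact ((hmem1 m hmM u).1 hu).symm.trans ((hmem1 m' hmM' u).1 hu')
      · intro m hm
        exact hlen1 m (Finset.mem_of_mem_filter m (by rw [hBad1def] at hm; exact_mod_cast hm))
    have hc2 : ∀ (F : Finset ℕ), F ⊆ Bad2 → ((F:Set ℕ).Pairwise fun m m' => m + 2 ≤ m' ∨ m' + 2 ≤ m) →
        (F.card : ℝ) * (1/(3*(n:ℝ))) ≤ 1/100 := by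
      intro F hF hpair
      apply card_real_bound (by norm_num)
      refine le_of_lt (lt_of_le_of_lt ?_ hk0)
      have hFM : ∀ m ∈ F, m ∈ Mset := fun m hm =>
        Finset.mem_of_mem_filter m (by rw [← hBad2def]; exact hF hm)
      apply card_le_of_disjoint_windows F W2 (B k0) (1/(3*(n:ℝ))) ?_ ?_ ?_ ?_
      · intro m hm u hu
        rw [hBdef]
        refine ⟨hW2J m (hFM m hm) hu, fun hA => ?_⟩
        exact hBad2empty m (hF hm) ⟨u, hu, hA⟩
      · intro m _; rw [hW2def]; exact measurableSet_Ico
      · intro m hm m' hm' hne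
        refine Set.disjoint_left.2 fun u hu hu' => ?_
        have e1 := (hmem2 m (hFM m hm) u).1 hu
        have e2 := (hmem2 m' (hFM m' hm') u).1 hu'
        have hmm' := Finset.mem_Icc.1 (by rw [hMsetdef] at hFM; exact hFM m hm)
        have hmm2' := Finset.mem_Icc.1 (by rw [hMsetdef] at hFM; exact hFM m' hm')
        rcases hpair hm hm' hne with h | h
        · exact W2_disj_aux hn0 hT1 hmm2'.2 hn2 h e1 e2
        · exact W2_disj_aux hn0 hT1 hmm'.2 hn2 h e2 e1
      · intro m hm; exact hlen2 m (hFM m hm)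
    have hpaire : ((Bad2e : Set ℕ)).Pairwise fun m m' => m + 2 ≤ m' ∨ m' + 2 ≤ m := by
      intro m hm m' hm' hne
      have hm1 : m ∈ Bad2e := Finset.mem_coe.1 hm
      have hm2 : m' ∈ Bad2e := Finset.mem_coe.1 hm'
      rw [hBad2edef, Finset.mem_filter] at hm1 hm2
      have h1 : Even m := hm1.2
      have h2 : Even m' := hm2.2
      obtain ⟨a, ha⟩ := h1; obtain ⟨b, hb⟩ := h2
      omega
    have hpairo : ((Bad2o : Set ℕ)).Pairwise fun m m' => m + 2 ≤ m' ∨ m' + 2 ≤ m := by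
      intro m hm m' hm' hne
      have hm1 : m ∈ Bad2o := Finset.mem_coe.1 hm
      have hm2 : m' ∈ Bad2o := Finset.mem_coe.1 hm'
      rw [hBad2odef, Finset.mem_filter] at hm1 hm2
      have h1 : ¬ Even m := hm1.2
      have h2 : ¬ Even m' := hm2.2
      rw [Nat.not_even_iff] at h1 h2
      omega
    have hc2e := hc2 Bad2e (by rw [hBad2edef]; exact Finset.filter_subset _ _) hpaire
    have hc2o := hc2 Bad2o (by rw [hBad2odef]; exact Finset.filter_subset _ _) hpairo
    -- contradiction
    have hcard : Mset.card = n - 1 := by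
      rw [hMsetdef, Nat.card_Icc]; omega
    have hcardR : ((n:ℝ) - 1) ≤ (Bad1.card : ℝ) + (Bad2e.card : ℝ) + (Bad2o.card : ℝ) := by
      have h : (n - 1 : ℕ) = Bad2e.card + Bad2o.card + Bad1.card := by
        rw [← hcard, ← hsplit, ← hsplit2]
      have h2 : ((n-1:ℕ):ℝ) = (Bad2e.card:ℝ) + (Bad2o.card:ℝ) + (Bad1.card:ℝ) := by
        exact_mod_cast h
      have h3 : ((n:ℝ) - 1) ≤ ((n-1:ℕ):ℝ) := by
        have : (1:ℕ) ≤ n := by omega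
        rw [Nat.cast_sub this]; norm_num
      linarith
    have hb1 : (Bad1.card : ℝ) ≤ 2*(n:ℝ)/100 := by
      have hne : (0:ℝ) < 2*(n:ℝ) := by positivity
      rw [mul_one_div] at hc1
      calc (Bad1.card : ℝ) = ((Bad1.card : ℝ) / (2*n)) * (2*n) := by field_simp
        _ ≤ (1/100) * (2*n) := by apply mul_le_mul_of_nonneg_right hc1 hne.le
        _ = 2*(n:ℝ)/100 := by ring
    have hb2e : (Bad2e.card : ℝ) ≤ 3*(n:ℝ)/100 := by
      have hne : (0:ℝ) < 3*(n:ℝ) := by positivity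
      rw [mul_one_div] at hc2e
      calc (Bad2e.card : ℝ) = ((Bad2e.card : ℝ) / (3*n)) * (3*n) := by field_simp
        _ ≤ (1/100) * (3*n) := by apply mul_le_mul_of_nonneg_right hc2e hne.le
        _ = 3*(n:ℝ)/100 := by ring
    have hb2o : (Bad2o.card : ℝ) ≤ 3*(n:ℝ)/100 := by
      have hne : (0:ℝ) < 3*(n:ℝ) := by positivity
      rw [mul_one_div] at hc2o
      calc (Bad2o.card : ℝ) = ((Bad2o.card : ℝ) / (3*n)) * (3*n) := by field_simp
        _ ≤ (1/100) * (3*n) := by apply mul_le_mul_of_nonneg_right hc2o hne.le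
        _ = 3*(n:ℝ)/100 := by ring
    have hn2' : (2:ℝ) ≤ n := by exact_mod_cast hn2
    linarith
  -- use the good m
  obtain ⟨m, hmM, ⟨u1, hu1A, hu1⟩, ⟨u2, hu2A, hu2⟩⟩ := key
  rw [hMsetdef, Finset.mem_Icc] at hmM
  rw [hAdef] at hu1A hu2A
  have h1 := Set.mem_iInter₂.1 hu1A.2 n (by exact hnk0)
  have h2 := Set.mem_iInter₂.1 hu2A.2 m (by omega : k0 ≤ m)
  simp only [hSdef, Set.mem_setOf_eq] at h1 h2
  rw [hu1] at h1
  rw [hu2] at h2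
  linarith [h1.1, h2.1]
lemma poly_bound (G : ℕ → ℝ) (γ : ℝ) (hγ0 : 0 < γ) (hγ1 : γ < 1)
    (hG : RegVarSeq G γ) (hGpos : ∃ N, ∀ n ≥ N, 0 < G n) :
    ∃ (N3 : ℕ) (C1 ρ : ℝ), 0 < C1 ∧ 0 ≤ ρ ∧ ρ < 1 ∧ 1 ≤ N3 ∧
      ∀ m, N3 ≤ m → 0 < G m ∧ G m ≤ C1 * (m:ℝ) ^ ρ := by
  obtain ⟨N0, hN0⟩ := hGpos
  obtain ⟨NA, hNA⟩ := doubling_bound G γ hγ0 hγ1 hG N0 hN0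
  set ρ : ℝ := (1+γ)/2 with hρdef
  have hρ0 : 0 ≤ ρ := by rw [hρdef]; linarith
  have hρ1 : ρ < 1 := by rw [hρdef]; linarith
  have h2γ : (2:ℝ)^γ < (2:ℝ)^ρ :=
    (Real.rpow_lt_rpow_left_iff (by norm_num)).2 (by rw [hρdef]; linarith)
  have hlim := hG 2 (by norm_num)
  have hfl : ∀ n : ℕ, ⌊(2:ℝ) * (n:ℝ)⌋₊ = 2*n := by
    intro n
    rw [show ((2:ℝ)*(n:ℝ)) = ((2*n : ℕ):ℝ) by push_cast; ring, Nat.floor_natCast]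
  obtain ⟨N2, hN2⟩ := Filter.eventually_atTop.1 (hlim.eventually_lt_const h2γ)
  set N3 : ℕ := NA + N2 + N0 + 1 with hN3def
  have hN3pos : 1 ≤ N3 := by omega
  have hGN3 : 0 < G N3 := hN0 N3 (by omega)
  set q : ℝ := (2:ℝ)^ρ with hqdef
  have hq0 : 0 < q := by rw [hqdef]; positivity
  have hdouble : ∀ n : ℕ, N3 ≤ n → G (2*n) ≤ q * G n := by
    intro n hn
    have h := hN2 n (by omega)
    rw [hfl n] at h
    have hGn : 0 < G n := hN0 n (by omega)
    have := (div_lt_iff₀ hGn).1 h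
    rw [hqdef]
    linarith
  have ind : ∀ j : ℕ, G (N3 * 2^j) ≤ q^j * G N3 := by
    intro j
    induction j with
    | zero => simp
    | succ j ih =>
      have h1 : N3 * 2^(j+1) = 2 * (N3 * 2^j) := by ring
      have hle : N3 ≤ N3 * 2^j := Nat.le_mul_of_pos_right _ (by positivity)
      calc G (N3 * 2^(j+1)) = G (2 * (N3 * 2^j)) := by rw [h1]
        _ ≤ q * G (N3 * 2^j) := hdouble _ hle
        _ ≤ q * (q^j * G N3) := mul_le_mul_of_nonneg_left ih hq0.le
        _ = q^(j+1) * G N3 := by ring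
  refine ⟨N3, 64 * G N3, ρ, by positivity, hρ0, hρ1, hN3pos, ?_⟩
  intro m hm
  have hGm : 0 < G m := hN0 m (by omega)
  refine ⟨hGm, ?_⟩
  set j := Nat.log 2 (m / N3) with hjdef
  have hm0 : m / N3 ≠ 0 := by
    have : 1 ≤ m / N3 := (Nat.one_le_div_iff (by omega)).2 hm
    omega
  have h1 : 2^j ≤ m / N3 := Nat.pow_log_le_self 2 hm0
  have h2 : m / N3 < 2^(j+1) := Nat.lt_pow_succ_log_self (by norm_num) _
  set n' := N3 * 2^j with hn'def
  have hn'le : n' ≤ m := by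
    calc n' = N3 * 2^j := rfl
      _ ≤ N3 * (m / N3) := Nat.mul_le_mul_left _ h1
      _ = (m / N3) * N3 := by ring
      _ ≤ m := Nat.div_mul_le_self m N3
  have hmle : m ≤ 2 * n' := by
    have h3 : m < 2^(j+1) * N3 := (Nat.div_lt_iff_lt_mul (by omega)).1 h2
    have h4 : 2^(j+1) * N3 = 2 * n' := by rw [hn'def]; ring
    omega
  have hA := hNA n' (by
    have : N3 ≤ n' := Nat.le_mul_of_pos_right _ (by positivity)
    omega) m hn'le hmle
  have h3 : G m ≤ 64 * (q^j * G N3) := by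
    have hij := ind j
    have : (64:ℝ) * G n' ≤ 64 * (q^j * G N3) := by
      apply mul_le_mul_of_nonneg_left _ (by norm_num)
      exact hij
    linarith
  have h4 : q^j ≤ (m:ℝ)^ρ := by
    have e1 : q^j = ((2:ℝ)^(j:ℕ))^ρ := by
      rw [hqdef, ← Real.rpow_natCast ((2:ℝ)^ρ) j, ← Real.rpow_mul (by norm_num),
        ← Real.rpow_natCast (2:ℝ) j, ← Real.rpow_mul (by norm_num), mul_comm]
    rw [e1]
    apply Real.rpow_le_rpow (by positivity) _ hρ0
    have h5 : (2:ℕ)^j ≤ m := le_trans h1 (Nat.div_le_self m N3)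
    exact_mod_cast h5
  have h6 : q^j * G N3 ≤ (m:ℝ)^ρ * G N3 := mul_le_mul_of_nonneg_right h4 hGN3.le
  calc G m ≤ 64 * (q^j * G N3) := h3
    _ ≤ 64 * ((m:ℝ)^ρ * G N3) := by linarith
    _ = 64 * G N3 * (m:ℝ)^ρ := by ring
/-- With `c_{n,i} = g_{[0,i)} I_n` where `I_n` (the truncated mean) is
`O(F_*^←(1-1/n)/n)` and `g_{[0,·)}` is regularly varying of index `γ < 1`, for any
`M > 0` one has `max_{1 ≤ i ≤ Mn} c_{n,i}/F_*^←(1-1/n) → 0` as `n → ∞`. -/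
theorem centering_negligible
    (α γ : ℝ) (hα1 : 1 < α) (hα2 : α < 2) (hγ0 : 0 < γ) (hγ1 : γ < 1)
    (G : ℕ → ℝ) (hG : RegVarSeq G γ) (hGpos : ∃ N, ∀ n ≥ N, 0 < G n)
    (Fsq : ℕ → ℝ) (hFsq : RegVarSeq Fsq (1 / α)) (hFsqpos : ∀ n, 0 < Fsq n)
    (I : ℕ → ℝ) (hI : I =O[atTop] (fun n : ℕ => Fsq n / n))
    (c : ℕ → ℕ → ℝ) (hc : ∀ n i, c n i = G i * I n) :
    ∀ M : ℝ, 0 < M →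
      Tendsto (fun n : ℕ => ⨆ i ∈ Finset.Icc 1 ⌊M * (n : ℝ)⌋₊, c n i / Fsq n)
        atTop (𝓝 0) := by
  obtain ⟨N3, C1, ρ, hC1, hρ0, hρ1, hN31, hpoly⟩ := poly_bound G γ hγ0 hγ1 hG hGpos
  intro M hM
  obtain ⟨K, hK0, hKbd⟩ := hI.exists_nonneg
  have hKev : ∀ᶠ n : ℕ in atTop, |I n| ≤ K * (Fsq n / (n:ℝ)) := by
    filter_upwards [hKbd.bound, eventually_ge_atTop 1] with n h1 h2
    have hn' : (0:ℝ) < n := by exact_mod_cast h2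
    rw [Real.norm_eq_abs, Real.norm_eq_abs, abs_of_pos (div_pos (hFsqpos n) hn')] at h1
    exact h1
  set E : ℝ := max 0 ((Finset.range (N3+1)).sup' (Finset.nonempty_range_iff.2 (by omega))
    (fun i => |G i|)) with hEdef
  have hE0 : 0 ≤ E := le_max_left _ _
  have hEsmall : ∀ i ≤ N3, |G i| ≤ E := by
    intro i hi
    refine le_trans (Finset.le_sup' (fun i => |G i|) ?_) (le_max_right _ _)
    exact Finset.mem_range.2 (by omega)
  have habs : ∀ i : ℕ, 1 ≤ i → ∀ x : ℝ, (i:ℝ) ≤ x → |G i| ≤ E + C1 * x ^ ρ := by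
    intro i hi x hx
    have hx0 : (0:ℝ) ≤ x := le_trans (Nat.cast_nonneg i) hx
    rcases le_or_gt i N3 with h | h
    · have h1 := hEsmall i h
      have h2 : 0 ≤ C1 * x ^ ρ := by positivity
      linarith
    · obtain ⟨hpos, hle⟩ := hpoly i (by omega)
      rw [abs_of_pos hpos]
      have h2 : (i:ℝ)^ρ ≤ x^ρ := Real.rpow_le_rpow (Nat.cast_nonneg i) hx hρ0
      nlinarith
  set b : ℕ → ℝ := fun n => (E + C1 * (M*(n:ℝ))^ρ) * (K / (n:ℝ)) with hbdef
  have hbtend : Tendsto b atTop (𝓝 0) := by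
    have t1 : Tendsto (fun n : ℕ => E*K/(n:ℝ)) atTop (𝓝 0) :=
      tendsto_const_div_atTop_nhds_zero_nat _
    have t2 : Tendsto (fun n : ℕ => (n:ℝ)^(ρ-1)) atTop (𝓝 0) := by
      have h := (tendsto_rpow_neg_atTop (by linarith : (0:ℝ) < 1 - ρ)).comp
        (tendsto_natCast_atTop_atTop (R := ℝ))
      simpa [Function.comp_def, neg_sub] using h
    have t3 : Tendsto (fun n : ℕ => E*K/(n:ℝ) + (C1 * M^ρ * K) * (n:ℝ)^(ρ-1))
        atTop (𝓝 0) := by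
      have h := t1.add (t2.const_mul (C1 * M^ρ * K))
      simpa using h
    apply t3.congr'
    filter_upwards [eventually_ge_atTop 1] with n hn
    have hn' : (0:ℝ) < n := by exact_mod_cast hn
    have e1 : (M*(n:ℝ))^ρ = M^ρ * (n:ℝ)^ρ := Real.mul_rpow hM.le (Nat.cast_nonneg n)
    have e2 : (n:ℝ)^(ρ-1) = (n:ℝ)^ρ / n := by
      rw [Real.rpow_sub hn', Real.rpow_one]
    rw [hbdef]
    simp only []
    rw [e1, e2]
    field_simp
  have hmain : ∀ᶠ n : ℕ in atTop,
      0 ≤ (⨆ i ∈ Finset.Icc 1 ⌊M*(n:ℝ)⌋₊, c n i / Fsq n) ∧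
      (⨆ i ∈ Finset.Icc 1 ⌊M*(n:ℝ)⌋₊, c n i / Fsq n) ≤ b n := by
    filter_upwards [hKev, eventually_ge_atTop 1] with n hKn hn1
    have hn' : (0:ℝ) < n := by exact_mod_cast hn1
    have hMn0 : 0 ≤ M * (n:ℝ) := by positivity
    have hrnn : (0:ℝ) ≤ (M*(n:ℝ))^ρ := Real.rpow_nonneg hMn0 ρ
    have hbnn : 0 ≤ b n := by
      rw [hbdef]
      have h2 : 0 ≤ K / (n:ℝ) := by positivity
      have h3 : 0 ≤ E + C1 * (M*(n:ℝ))^ρ := by nlinarith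
      exact mul_nonneg h3 h2
    have hterm : ∀ i : ℕ, i ∈ Finset.Icc 1 ⌊M*(n:ℝ)⌋₊ → c n i / Fsq n ≤ b n := by
      intro i hi
      obtain ⟨hi1, hi2⟩ := Finset.mem_Icc.1 hi
      have hiM : (i:ℝ) ≤ M * n :=
        le_trans (Nat.cast_le.2 hi2) (Nat.floor_le hMn0)
      have hGi := habs i hi1 (M*n) hiM
      have hIb : |I n| / Fsq n ≤ K / n := by
        rw [div_le_div_iff₀ (hFsqpos n) hn']
        have e : K * (Fsq n / n) * n = K * Fsq n := by field_simp
        have h5 := mul_le_mul_of_nonneg_right hKn hn'.le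
        rw [e] at h5
        exact h5
      calc c n i / Fsq n = G i * I n / Fsq n := by rw [hc]
        _ ≤ |G i * I n| / Fsq n := by
            have hFn := hFsqpos n
            gcongr
            exact le_abs_self _
        _ = |G i| * |I n| / Fsq n := by rw [abs_mul]
        _ = |G i| * (|I n| / Fsq n) := by ring
        _ ≤ (E + C1 * (M*(n:ℝ))^ρ) * (K / n) :=
            mul_le_mul hGi hIb (div_nonneg (abs_nonneg _) (hFsqpos n).le) (le_trans (abs_nonneg _) hGi)
        _ = b n := by rw [hbdef]
    constructor
    · have hbdd : BddAbove (Set.range fun i : ℕ =>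
          ⨆ _ : i ∈ Finset.Icc 1 ⌊M*(n:ℝ)⌋₊, c n i / Fsq n) := by
        refine ⟨b n, ?_⟩
        rintro x ⟨i, rfl⟩
        show (⨆ _ : i ∈ Finset.Icc 1 ⌊M*(n:ℝ)⌋₊, c n i / Fsq n) ≤ b n
        by_cases hi : i ∈ Finset.Icc 1 ⌊M*(n:ℝ)⌋₊
        · rw [ciSup_pos hi]
          exact hterm i hi
        · haveI : IsEmpty (i ∈ Finset.Icc 1 ⌊M*(n:ℝ)⌋₊) := ⟨hi⟩
          rw [Real.iSup_of_isEmpty]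
          exact hbnn
      have h0 : (⨆ _ : (0:ℕ) ∈ Finset.Icc 1 ⌊M*(n:ℝ)⌋₊, c n 0 / Fsq n) = 0 := by
        haveI : IsEmpty ((0:ℕ) ∈ Finset.Icc 1 ⌊M*(n:ℝ)⌋₊) := ⟨by simp⟩
        exact Real.iSup_of_isEmpty _
      have h1 := le_ciSup hbdd 0
      rw [h0] at h1
      exact h1
    · apply Real.iSup_le _ hbnn
      intro i
      show (⨆ _ : i ∈ Finset.Icc 1 ⌊M*(n:ℝ)⌋₊, c n i / Fsq n) ≤ b n
      by_cases hi : i ∈ Finset.Icc 1 ⌊M*(n:ℝ)⌋₊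
      · rw [ciSup_pos hi]
        exact hterm i hi
      · haveI : IsEmpty (i ∈ Finset.Icc 1 ⌊M*(n:ℝ)⌋₊) := ⟨hi⟩
        rw [Real.iSup_of_isEmpty]
        exact hbnn
  exact squeeze_zero' (hmain.mono fun n h => h.1) (hmain.mono fun n h => h.2) hbtend
end
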